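/- Let n ≥ 1 and a1,...,an ≥ 2 be integers (a1 ≥ 1 allowed). Define rationals w1 = 1/(a1+1) and w_{i+1} = (1 − w_i)/a_{i+1} for 1 ≤ i ≤ n−1. Then the product ∏_{i=1}^n (1/w_i − 1) equals ρ(a_n, a_{n−1}, ..., a_2, a_1+1), where ρ(x1,...,xk) = x1···xk − x2···xk + ... + (−1)^{k−1}x_k + (−1)^k. -/

import Mathlib

/-- The alternating function ρ: ρ() = 1, ρ(x₁,...,x_k) = x₁·x₂···x_k − ρ(x₂,...,x_k). -/
def rho : List ℤ → ℤ
  | [] => 1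
  | x :: xs => x * xs.prod - rho xs

theorem stmt5 (n : ℕ) (hn : 1 ≤ n) (a : ℕ → ℤ) (w : ℕ → ℚ)
    (ha1 : 1 ≤ a 1) (ha : ∀ i, 2 ≤ i → i ≤ n → 2 ≤ a i)
    (hw1 : w 1 = 1 / ((a 1 : ℚ) + 1))
    (hw : ∀ i, 1 ≤ i → i ≤ n - 1 → w (i + 1) = (1 - w i) / (a (i + 1) : ℚ)) :
    ∏ i ∈ Finset.Icc 1 n, (1 / w i - 1) =
      ((rho ((List.range n).map
        (fun j => if j = n - 1 then a 1 + 1 else a (n - j))) : ℤ) : ℚ) := by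
  set L : ℕ → List ℤ :=
    fun k => (List.range k).map (fun j => if j = k - 1 then a 1 + 1 else a (k - j)) with hL
  have ha1Q' : (1:ℚ) ≤ (a 1 : ℚ) := by exact_mod_cast ha1
  have ha1Q : (0:ℚ) < (a 1 : ℚ) + 1 := by linarith
  have hpos : ∀ k, 1 ≤ k → k ≤ n → 0 < w k ∧ w k < 1 := by
    intro k
    induction k with
    | zero => omega
    | succ m ih =>
      intro _ hkn
      rcases Nat.eq_zero_or_pos m with hm | hm
      · subst hm
        rw [hw1]
        constructor
        · positivity
        · rw [div_lt_one ha1Q]; linarith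
      · have hmn : m ≤ n - 1 := by omega
        obtain ⟨h1, h2⟩ := ih hm (by omega)
        have haQ : (2:ℚ) ≤ (a (m+1) : ℚ) := by
          exact_mod_cast ha (m+1) (by omega) hkn
        rw [hw m hm hmn]
        constructor
        · apply div_pos <;> linarith
        · rw [div_lt_one (by linarith)]; linarith
  have hLsucc : ∀ k, 1 ≤ k → L (k+1) = a (k+1) :: L k := by
    intro k hk
    simp only [hL, List.range_succ_eq_map, List.map_cons, List.map_map]
    have h0 : ¬ (0 = (k+1) - 1) := by omega
    rw [if_neg h0]
    congr 1
    apply List.map_congr_left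
    intro j hj
    have hjk : j < k := List.mem_range.mp hj
    simp only [Function.comp]
    by_cases h : j = k - 1
    · have h' : j + 1 = (k+1) - 1 := by omega
      rw [if_pos h', if_pos h]
    · have h' : ¬ (j + 1 = (k+1) - 1) := by omega
      have h2 : k + 1 - (j + 1) = k - j := by omega
      rw [if_neg h', if_neg h, h2]
  have main : ∀ k, 1 ≤ k → k ≤ n →
      (∏ i ∈ Finset.Icc 1 k, (1 / w i - 1)
          = (1 - w k) * ((a 1 : ℚ) + 1) * ∏ i ∈ Finset.Icc 2 k, (a i : ℚ))
      ∧ (((L k).prod : ℤ) : ℚ) = ((a 1 : ℚ) + 1) * ∏ i ∈ Finset.Icc 2 k, (a i : ℚ)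
      ∧ ((rho (L k) : ℤ) : ℚ)
          = (1 - w k) * ((a 1 : ℚ) + 1) * ∏ i ∈ Finset.Icc 2 k, (a i : ℚ) := by
    intro k hk
    induction k, hk using Nat.le_induction with
    | base =>
      intro _
      have hL1 : L 1 = [a 1 + 1] := by
        simp [hL, List.range_succ]
      have hIcc : Finset.Icc 2 1 = (∅ : Finset ℕ) := by decide
      rw [hL1, hIcc]
      simp only [Finset.Icc_self, Finset.prod_singleton, Finset.prod_empty, mul_one,
        rho, List.prod_nil, List.prod_cons]
      rw [hw1]
      push_cast
      refine ⟨by field_simp, by ring, by field_simp⟩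
    | succ m hm ih =>
      intro hmn
      obtain ⟨ih1, ih2, ih3⟩ := ih (by omega)
      have hweq : w (m+1) = (1 - w m) / (a (m+1) : ℚ) := hw m hm (by omega)
      obtain ⟨hwm0, hwm1⟩ := hpos m hm (by omega)
      obtain ⟨hws0, hws1⟩ := hpos (m+1) (by omega) hmn
      have hα : (a (m+1) : ℚ) ≠ 0 := by
        have : (2:ℚ) ≤ (a (m+1) : ℚ) := by exact_mod_cast ha (m+1) (by omega) hmn
        linarith
      have hwm1' : (1 : ℚ) - w m ≠ 0 := by linarith
      have hws0' : w (m+1) ≠ 0 := ne_of_gt hws0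
      have hrel : (1 : ℚ) - w m = (a (m+1) : ℚ) * w (m+1) := by
        rw [hweq]; field_simp
      have hI1 : ∏ i ∈ Finset.Icc 1 (m+1), (1 / w i - 1)
          = (∏ i ∈ Finset.Icc 1 m, (1 / w i - 1)) * (1 / w (m+1) - 1) :=
        Finset.prod_Icc_succ_top (by omega) _
      have hI2 : ∏ i ∈ Finset.Icc 2 (m+1), (a i : ℚ)
          = (∏ i ∈ Finset.Icc 2 m, (a i : ℚ)) * (a (m+1) : ℚ) :=
        Finset.prod_Icc_succ_top (by omega) _
      rw [hI1, hI2, ih1, hLsucc m hm]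
      refine ⟨?_, ?_, ?_⟩
      · rw [hweq]
        field_simp
      · rw [List.prod_cons, Int.cast_mul, ih2]; ring
      · rw [rho, Int.cast_sub, Int.cast_mul, ih2, ih3, hrel]; ring
  obtain ⟨h1, _, h3⟩ := main n hn le_rfl
  rw [h1, h3]
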